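/- arXiv:0708.3123 — 4 statements merged into one kernel-verified Lean document; each statement's English description precedes it below -/
import Mathlib

section
/- Let k be a natural number, and let z > 0 and s > 1/2 + k be real numbers. Then ∫₀^∞ e^{−t z²} t^{s−1} (∫₀^∞ x^{2k} e^{−t x²} dx) dt = (√π · C_k / 2) · z^{1 + 2k − 2s} · Γ(s − 1/2 − k), where Γ is the Gamma function, C_0 = 1 and C_k = ∏_{m=0}^{k−1}(m + 1/2) for k ≥ 1. -/
open MeasureTheory Real Finset

lemma gamma_nat_add_half (k : ℕ) :
    Real.Gamma ((k : ℝ) + 1 / 2) = Real.sqrt π * ∏ m ∈ Finset.range k, ((m : ℝ) + 1 / 2) := by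
  induction k with
  | zero =>
      simp only [Nat.cast_zero, zero_add, Finset.range_zero, Finset.prod_empty, mul_one]
      exact Real.Gamma_one_half_eq
  | succ n ih =>
      have h : ((n : ℝ) + 1 / 2) ≠ 0 := by positivity
      rw [Finset.prod_range_succ]
      push_cast
      rw [show ((n : ℝ) + 1 + 1 / 2) = ((n : ℝ) + 1 / 2) + 1 by ring,
        Real.Gamma_add_one h, ih]
      ring

lemma inner_integral_eval (k : ℕ) {t : ℝ} (ht : 0 < t) :
    (∫ x in Set.Ioi (0 : ℝ), x ^ (2 * k) * Real.exp (-(t * x ^ 2)))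
      = t ^ (-((2 * (k : ℝ) + 1)) / 2) * (1 / 2) * Real.Gamma ((2 * (k : ℝ) + 1) / 2) := by
  have h := integral_rpow_mul_exp_neg_mul_rpow (p := 2) (q := 2 * (k : ℝ)) (b := t)
    (by norm_num) (by have : (0:ℝ) ≤ k := Nat.cast_nonneg k; linarith) ht
  rw [← h]
  refine setIntegral_congr_fun measurableSet_Ioi fun x hx => ?_
  have hx0 : (0 : ℝ) ≤ x := le_of_lt hx
  rw [show ((2 : ℝ) * k) = ((2 * k : ℕ) : ℝ) by push_cast; ring, Real.rpow_natCast,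
    Real.rpow_two]
  ring_nf

/-- Lemma 2.2: for a natural number `k` and real `z > 0`, `s > 1/2 + k`,
the Laplace–Mellin transform of `p_k(t) = ∫₀^∞ x^{2k} e^{−t x²} dx` is
`(√π · C_k / 2) · z^{1 + 2k − 2s} · Γ(s − 1/2 − k)`, where `C_0 = 1` and
`C_k = ∏_{m=0}^{k−1}(m + 1/2)` for `k ≥ 1`. -/
theorem laplace_mellin_gaussian_moment (k : ℕ) (z s : ℝ)
    (hz : 0 < z) (hs : 1 / 2 + k < s) :
    ∫ t in Set.Ioi (0 : ℝ),
        Real.exp (-(t * z ^ 2)) * t ^ (s - 1)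
          * (∫ x in Set.Ioi (0 : ℝ), x ^ (2 * k) * Real.exp (-(t * x ^ 2)))
      = (Real.sqrt π * (∏ m ∈ Finset.range k, ((m : ℝ) + 1 / 2)) / 2)
          * z ^ (1 + 2 * (k : ℝ) - 2 * s) * Real.Gamma (s - 1 / 2 - k) := by
  set c : ℝ := (1 / 2) * Real.Gamma ((2 * (k : ℝ) + 1) / 2) with hc
  have hz2 : (0 : ℝ) < z ^ 2 := by positivity
  have step1 :
      ∫ t in Set.Ioi (0 : ℝ),
          Real.exp (-(t * z ^ 2)) * t ^ (s - 1)
            * (∫ x in Set.Ioi (0 : ℝ), x ^ (2 * k) * Real.exp (-(t * x ^ 2)))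
        = ∫ t in Set.Ioi (0 : ℝ),
            c * (t ^ (s - 1 - (2 * (k : ℝ) + 1) / 2) * Real.exp (-(z ^ 2) * t)) := by
    refine setIntegral_congr_fun measurableSet_Ioi fun t ht => ?_
    rw [inner_integral_eval k ht]
    rw [show s - 1 - (2 * (k : ℝ) + 1) / 2 = (s - 1) + (-(2 * (k : ℝ) + 1) / 2) by ring,
      Real.rpow_add ht]
    rw [hc]
    ring_nf
  rw [step1, integral_const_mul]
  have hq : (-1 : ℝ) < s - 1 - (2 * (k : ℝ) + 1) / 2 := by linarith
  have h2 := integral_rpow_mul_exp_neg_mul_rpow (p := 1)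
    (q := s - 1 - (2 * (k : ℝ) + 1) / 2) (b := z ^ 2) (by norm_num) hq hz2
  simp_rw [Real.rpow_one] at h2
  rw [h2]
  simp only [hc]
  have hkey : (2 * (k : ℝ) + 1) / 2 = (k : ℝ) + 1 / 2 := by ring
  rw [hkey, gamma_nat_add_half]
  have hzpow : ((z ^ 2 : ℝ)) ^ (-(s - 1 - ((k : ℝ) + 1 / 2) + 1) / 1)
      = z ^ (1 + 2 * (k : ℝ) - 2 * s) := by
    rw [← Real.rpow_natCast z 2, ← Real.rpow_mul hz.le]
    congr 1
    push_cast
    ring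
  rw [hzpow, show (s - 1 - ((k : ℝ) + 1 / 2) + 1) / 1 = s - 1 / 2 - k by ring]
  ring
end

section
/- Let V be a real number and let z > 0 and s > 3/2 be real numbers. Then ∫₀^∞ e^{−t z²} t^{s−1} · 2V · (∫_{−∞}^∞ e^{−t x²}(x² + 1) dx) dt = √π · V · ( z^{3 − 2s} · Γ(s − 3/2) + 2 · z^{1 − 2s} · Γ(s − 1/2) ), where Γ is the Gamma function. -/
open MeasureTheory Real

open Set in
lemma lm_inner_eval {b : ℝ} (hb : 0 < b) :
    (∫ x : ℝ, Real.exp (-(b * x ^ 2)) * (x ^ 2 + 1))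
      = Real.sqrt π * ((1 / 2) * b ^ (-(3 / 2) : ℝ) + b ^ (-(1 / 2) : ℝ)) := by
  have h1 : Integrable (fun x : ℝ => x ^ 2 * Real.exp (-b * x ^ 2)) := by
    have := integrable_rpow_mul_exp_neg_mul_sq hb (show (-1 : ℝ) < 2 by norm_num)
    refine this.congr ?_
    filter_upwards with x
    rw [show ((2 : ℝ) = ((2 : ℕ) : ℝ)) by norm_num, Real.rpow_natCast]
  have h2 : Integrable (fun x : ℝ => Real.exp (-b * x ^ 2)) := integrable_exp_neg_mul_sq hb
  have hsplit : (∫ x : ℝ, Real.exp (-(b * x ^ 2)) * (x ^ 2 + 1))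
      = (∫ x : ℝ, x ^ 2 * Real.exp (-b * x ^ 2)) + ∫ x : ℝ, Real.exp (-b * x ^ 2) := by
    rw [← integral_add h1 h2]
    congr 1; ext x; rw [neg_mul]; ring
  have hIoi : (∫ x in Ioi (0 : ℝ), x ^ 2 * Real.exp (-b * x ^ 2))
      = b ^ (-(3 / 2) : ℝ) * (1 / 2) * Real.Gamma (3 / 2) := by
    have := integral_rpow_mul_exp_neg_mul_rpow (p := 2) (q := 2)
      (show (0 : ℝ) < 2 by norm_num) (show (-1 : ℝ) < 2 by norm_num) hb
    rw [show (-(2 + 1) / 2 : ℝ) = (-(3 / 2) : ℝ) by norm_num,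
      show ((2 + 1) / 2 : ℝ) = (3 / 2 : ℝ) by norm_num] at this
    rw [← this]
    refine setIntegral_congr_fun measurableSet_Ioi (fun x hx => ?_)
    rw [show ((2 : ℝ) = ((2 : ℕ) : ℝ)) by norm_num, Real.rpow_natCast]
  have hGamma : Real.Gamma (3 / 2) = Real.sqrt π / 2 := by
    rw [show (3 / 2 : ℝ) = 1 / 2 + 1 by norm_num, Real.Gamma_add_one (by norm_num),
      Real.Gamma_one_half_eq]
    ring
  have hfull : (∫ x : ℝ, x ^ 2 * Real.exp (-b * x ^ 2))
      = 2 * ∫ x in Ioi (0 : ℝ), x ^ 2 * Real.exp (-b * x ^ 2) := by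
    rw [← integral_comp_abs (f := fun x => x ^ 2 * Real.exp (-b * x ^ 2))]
    congr 1; ext x; rw [sq_abs]
  have hgauss : (∫ x : ℝ, Real.exp (-b * x ^ 2)) = Real.sqrt π * b ^ (-(1 / 2) : ℝ) := by
    rw [integral_gaussian, Real.sqrt_div pi_nonneg, Real.rpow_neg hb.le,
      Real.sqrt_eq_rpow b, div_eq_mul_inv]
  rw [hsplit, hfull, hIoi, hGamma, hgauss]
  ring

/-- Laplace–Mellin transform of the 1-form identity term
`I_1(t) = 2V ∫_{−∞}^∞ e^{−tx²}(x²+1) dx`: for real `V`, `z > 0` and `s > 3/2`,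
`∫₀^∞ e^{−t z²} t^{s−1} · 2V · (∫_{−∞}^∞ e^{−t x²}(x²+1) dx) dt
  = √π·V·(z^{3−2s}·Γ(s−3/2) + 2·z^{1−2s}·Γ(s−1/2))`. -/
theorem laplace_mellin_identity_term_one_forms (V z s : ℝ) (hz : 0 < z) (hs : 3 / 2 < s) :
    ∫ t in Set.Ioi (0 : ℝ),
        Real.exp (-(t * z ^ 2)) * t ^ (s - 1) * (2 * V)
          * (∫ x : ℝ, Real.exp (-(t * x ^ 2)) * (x ^ 2 + 1))
      = Real.sqrt π * V * (z ^ (3 - 2 * s) * Real.Gamma (s - 3 / 2)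
          + 2 * z ^ (1 - 2 * s) * Real.Gamma (s - 1 / 2)) := by
  have hb : (0 : ℝ) < z ^ 2 := by positivity
  have hq1 : (0 : ℝ) < s - 3 / 2 := by linarith
  have hq2 : (0 : ℝ) < s - 1 / 2 := by linarith
  have hint : ∀ q : ℝ, -1 < q →
      IntegrableOn (fun t : ℝ => t ^ q * Real.exp (-(z ^ 2 * t))) (Set.Ioi 0) := by
    intro q hq
    have := integrableOn_rpow_mul_exp_neg_mul_rpow (p := 1) (s := q) hq one_pos hb
    refine this.congr_fun (fun t _ => ?_) measurableSet_Ioi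
    dsimp only
    rw [Real.rpow_one, neg_mul]
  have hi1 := hint (s - 3 / 2 - 1) (by linarith)
  have hi2 := hint (s - 1 / 2 - 1) (by linarith)
  have key : ∫ t in Set.Ioi (0 : ℝ),
        Real.exp (-(t * z ^ 2)) * t ^ (s - 1) * (2 * V)
          * (∫ x : ℝ, Real.exp (-(t * x ^ 2)) * (x ^ 2 + 1))
      = ∫ t in Set.Ioi (0 : ℝ),
          ((Real.sqrt π * V) * (t ^ (s - 3 / 2 - 1) * Real.exp (-(z ^ 2 * t)))
            + (2 * (Real.sqrt π * V)) * (t ^ (s - 1 / 2 - 1) * Real.exp (-(z ^ 2 * t)))) := by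
    refine setIntegral_congr_fun measurableSet_Ioi (fun t ht => ?_)
    have ht : (0 : ℝ) < t := ht
    rw [lm_inner_eval ht,
      show s - 3 / 2 - 1 = (s - 1) + (-(3 / 2) : ℝ) by ring,
      show s - 1 / 2 - 1 = (s - 1) + (-(1 / 2) : ℝ) by ring,
      Real.rpow_add ht, Real.rpow_add ht, mul_comm t (z ^ 2)]
    ring
  have e1 : ((1 : ℝ) / z ^ 2) ^ (s - 3 / 2) = z ^ (3 - 2 * s) := by
    rw [show (3 - 2 * s) = (-2 : ℝ) * (s - 3 / 2) by ring, Real.rpow_mul hz.le]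
    congr 1
    rw [Real.rpow_neg hz.le, one_div, show ((2 : ℝ)) = ((2 : ℕ) : ℝ) by norm_num,
      Real.rpow_natCast]
  have e2 : ((1 : ℝ) / z ^ 2) ^ (s - 1 / 2) = z ^ (1 - 2 * s) := by
    rw [show (1 - 2 * s) = (-2 : ℝ) * (s - 1 / 2) by ring, Real.rpow_mul hz.le]
    congr 1
    rw [Real.rpow_neg hz.le, one_div, show ((2 : ℝ)) = ((2 : ℕ) : ℝ) by norm_num,
      Real.rpow_natCast]
  rw [key, integral_add (hi1.const_mul _) (hi2.const_mul _), integral_const_mul,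
    integral_const_mul, Real.integral_rpow_mul_exp_neg_mul_Ioi hq1 hb,
    Real.integral_rpow_mul_exp_neg_mul_Ioi hq2 hb, e1, e2]
  ring
end

section
/- Let ι be a countable index type, let l : ι → ℝ satisfy l(i) > 0 for all i, let a : ι → ℂ, and let z > 0 be a real number. Assume the family i ↦ |a(i)| · e^{−(z+1)·l(i)} / l(i) is summable. Then the integral ∫₀^∞ e^{−t z²} · ( ∑_i a(i) · (4πt)^{−1/2} · e^{−l(i)²/(4t) − l(i)} ) · t^{−1} dt converges absolutely and equals ∑_i (a(i)/l(i)) · e^{−(z+1)·l(i)}. -/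
open MeasureTheory Real

open Set Filter

namespace LaplaceAux

lemma integrableOn_glasser (c : ℝ) :
    IntegrableOn (fun x : ℝ => Real.exp (-(x ^ 2 + c ^ 2 / x ^ 2))) (Set.Ioi 0) := by
  have hmeas : AEStronglyMeasurable (fun x : ℝ => Real.exp (-(x ^ 2 + c ^ 2 / x ^ 2)))
      (volume.restrict (Set.Ioi 0)) := by
    apply Measurable.aestronglyMeasurable
    fun_prop
  refine Integrable.mono' ((integrable_exp_neg_mul_sq one_pos).integrableOn) hmeas ?_
  filter_upwards with x
  rw [Real.norm_of_nonneg (Real.exp_nonneg _)]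
  apply Real.exp_le_exp.2
  have : 0 ≤ c ^ 2 / x ^ 2 := by positivity
  nlinarith

lemma glasser (c : ℝ) (hc : 0 < c) :
    ∫ x in Set.Ioi (0:ℝ), Real.exp (-(x ^ 2 + c ^ 2 / x ^ 2))
      = Real.sqrt π / 2 * Real.exp (-(2 * c)) := by
  set P : ℝ → ℝ := fun x => Real.exp (-(x ^ 2 + c ^ 2 / x ^ 2)) with hP
  -- substitution x ↦ c / x
  have hd2 : ∀ x ∈ Set.Ioi (0:ℝ), HasDerivWithinAt (fun x => c / x) (-(c / x ^ 2)) (Set.Ioi 0) x := by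
    intro x hx
    have hx0 : x ≠ 0 := ne_of_gt hx
    have h := ((hasDerivAt_inv hx0).const_mul c).hasDerivWithinAt (s := Set.Ioi (0:ℝ))
    have h2 : HasDerivWithinAt (fun x : ℝ => c / x) (c * -(x ^ 2)⁻¹) (Set.Ioi 0) x := by
      simpa [div_eq_mul_inv] using h
    convert h2 using 1
    field_simp
  have hinj2 : Set.InjOn (fun x => c / x) (Set.Ioi (0:ℝ)) := by
    have hanti : StrictAntiOn (fun x => c / x) (Set.Ioi (0:ℝ)) := by
      intro x hx y hy hxy
      exact div_lt_div_of_pos_left hc hx hxy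
    exact hanti.injOn
  have himg2 : (fun x => c / x) '' (Set.Ioi (0:ℝ)) = Set.Ioi (0:ℝ) := by
    ext y
    constructor
    · rintro ⟨x, hx, rfl⟩
      exact div_pos hc hx
    · intro hy
      exact ⟨c / y, div_pos hc hy, by field_simp⟩
  have hPcomp : ∀ x ∈ Set.Ioi (0:ℝ), |(-(c / x ^ 2))| • P (c / x) = (c / x ^ 2) * P x := by
    intro x hx
    have hx0 : (x:ℝ) ≠ 0 := ne_of_gt hx
    have h1 : |(-(c / x ^ 2))| = c / x ^ 2 := by
      rw [abs_neg, abs_of_pos (by positivity)]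
    have h2 : P (c / x) = P x := by
      simp only [hP]
      congr 1
      have hc0 : c ≠ 0 := ne_of_gt hc
      field_simp
      ring
    rw [h1, h2, smul_eq_mul]
  have hint2 : IntegrableOn (fun x => (c / x ^ 2) * P x) (Set.Ioi (0:ℝ)) := by
    have := (integrableOn_image_iff_integrableOn_abs_deriv_smul measurableSet_Ioi hd2 hinj2 P).mp
      (by rw [himg2]; exact integrableOn_glasser c)
    exact this.congr_fun hPcomp measurableSet_Ioi
  have heq2 : ∫ x in Set.Ioi (0:ℝ), P x = ∫ x in Set.Ioi (0:ℝ), (c / x ^ 2) * P x := by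
    have h := integral_image_eq_integral_abs_deriv_smul measurableSet_Ioi hd2 hinj2 P
    rw [himg2] at h
    rw [h]
    exact setIntegral_congr_fun measurableSet_Ioi hPcomp
  -- substitution x ↦ x - c/x
  have hd1 : ∀ x ∈ Set.Ioi (0:ℝ),
      HasDerivWithinAt (fun x => x - c / x) (1 + c / x ^ 2) (Set.Ioi 0) x := by
    intro x hx
    have hx0 : x ≠ 0 := ne_of_gt hx
    have h := ((hasDerivAt_id x).sub ((hasDerivAt_inv hx0).const_mul c)).hasDerivWithinAt
      (s := Set.Ioi (0:ℝ))
    have h2 : HasDerivWithinAt (fun x : ℝ => x - c / x) (1 - c * -(x ^ 2)⁻¹) (Set.Ioi 0) x := by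
      simpa [div_eq_mul_inv, Pi.sub_def] using h
    convert h2 using 1
    field_simp
    ring
  have hmono : StrictMonoOn (fun x => x - c / x) (Set.Ioi (0:ℝ)) := by
    intro x hx y hy hxy
    simp only
    have : c / y < c / x := div_lt_div_of_pos_left hc hx hxy
    linarith
  have himg1 : (fun x => x - c / x) '' (Set.Ioi (0:ℝ)) = Set.univ := by
    apply Set.eq_univ_of_forall
    intro y
    set s := Real.sqrt (y ^ 2 + 4 * c) with hs
    have hs2 : s ^ 2 = y ^ 2 + 4 * c := Real.sq_sqrt (by positivity)
    have habs : |y| < s := by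
      rw [hs, ← Real.sqrt_sq_eq_abs]
      exact Real.sqrt_lt_sqrt (sq_nonneg y) (by linarith)
    have hxpos : 0 < (y + s) / 2 := by
      have := neg_abs_le y
      linarith
    refine ⟨(y + s) / 2, hxpos, ?_⟩
    have hne : (y + s) / 2 ≠ 0 := ne_of_gt hxpos
    have hcx : c / ((y + s) / 2) = (y + s) / 2 - y := by
      rw [div_eq_iff hne]; nlinarith [hs2]
    simp only
    rw [hcx]; ring
  have hcomp1 : ∀ x ∈ Set.Ioi (0:ℝ),
      |(1 + c / x ^ 2)| • Real.exp (-((x - c / x) ^ 2))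
        = Real.exp (2 * c) * P x + Real.exp (2 * c) * ((c / x ^ 2) * P x) := by
    intro x hx
    have hx0 : x ≠ 0 := ne_of_gt hx
    have h1 : |(1 + c / x ^ 2)| = 1 + c / x ^ 2 := abs_of_pos (by positivity)
    have h2 : Real.exp (-((x - c / x) ^ 2)) = Real.exp (2 * c) * P x := by
      rw [hP, ← Real.exp_add]
      congr 1
      field_simp
      ring
    rw [h1, h2, smul_eq_mul, hP]
    ring
  have hgauss : ∫ x : ℝ, Real.exp (-(x ^ 2)) = Real.sqrt π := by
    have := integral_gaussian 1
    simpa using this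
  have key : Real.sqrt π = Real.exp (2 * c) * (2 * ∫ x in Set.Ioi (0:ℝ), P x) := by
    have h := integral_image_eq_integral_abs_deriv_smul measurableSet_Ioi hd1 hmono.injOn
      (fun y => Real.exp (-(y ^ 2)))
    rw [himg1] at h
    rw [← hgauss, ← setIntegral_univ, h,
      setIntegral_congr_fun measurableSet_Ioi hcomp1,
      integral_add ((integrableOn_glasser c).const_mul _) (hint2.const_mul _),
      integral_const_mul, integral_const_mul, ← heq2]
    ring
  have hexp : (0:ℝ) < Real.exp (2 * c) := Real.exp_pos _
  have : ∫ x in Set.Ioi (0:ℝ), P x = Real.sqrt π / (2 * Real.exp (2 * c)) := by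
    field_simp at key ⊢
    linarith
  rw [this, Real.exp_neg]
  field_simp

lemma rpow_neg_half_sq {A : ℝ} (hA : 0 < A) : (A ^ 2) ^ (-(1:ℝ) / 2) = A⁻¹ := by
  have h1 : (A : ℝ) ^ (2:ℕ) = A ^ ((2:ℕ) : ℝ) := (Real.rpow_natCast A 2).symm
  rw [h1, ← Real.rpow_mul hA.le]
  norm_num
  exact Real.rpow_neg_one A

lemma single (l z : ℝ) (hl : 0 < l) (hz : 0 < z) :
    IntegrableOn (fun t : ℝ => Real.exp (-(t * z ^ 2))
      * ((4 * π * t) ^ (-(1:ℝ) / 2) * Real.exp (-(l ^ 2 / (4 * t)))) * t⁻¹) (Set.Ioi 0) ∧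
    ∫ t in Set.Ioi (0:ℝ), Real.exp (-(t * z ^ 2))
      * ((4 * π * t) ^ (-(1:ℝ) / 2) * Real.exp (-(l ^ 2 / (4 * t)))) * t⁻¹
      = Real.exp (-(z * l)) / l := by
  set g : ℝ → ℝ := fun t => Real.exp (-(t * z ^ 2))
      * ((4 * π * t) ^ (-(1:ℝ) / 2) * Real.exp (-(l ^ 2 / (4 * t)))) * t⁻¹ with hg
  set c : ℝ := z * l / 2 with hc
  have hcpos : 0 < c := by positivity
  set f : ℝ → ℝ := fun u => l ^ 2 / (4 * u ^ 2) with hf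
  have hsπ : (0:ℝ) < Real.sqrt π := Real.sqrt_pos.mpr pi_pos
  -- derivative
  have hd : ∀ u ∈ Set.Ioi (0:ℝ), HasDerivWithinAt f (-(l ^ 2 / (2 * u ^ 3))) (Set.Ioi 0) u := by
    intro u hu
    have hu0 : u ≠ 0 := ne_of_gt hu
    have h1 : HasDerivAt (fun u : ℝ => u ^ 2) (2 * u) u := by
      simpa using hasDerivAt_pow 2 u
    have h2 := (h1.inv (pow_ne_zero 2 hu0)).const_mul (l ^ 2 / 4)
    have h3 : HasDerivWithinAt (fun u : ℝ => l ^ 2 / 4 * (u ^ 2)⁻¹)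
        (l ^ 2 / 4 * (-(2 * u) / (u ^ 2) ^ 2)) (Set.Ioi 0) u := h2.hasDerivWithinAt
    have hfun : f = fun u : ℝ => l ^ 2 / 4 * (u ^ 2)⁻¹ := by
      funext u; rw [hf]; ring
    rw [hfun]
    convert h3 using 1
    field_simp
    ring
  -- injectivity
  have hinj : Set.InjOn f (Set.Ioi (0:ℝ)) := by
    have hanti : StrictAntiOn f (Set.Ioi (0:ℝ)) := by
      intro u hu v hv huv
      have hu0 : (0:ℝ) < u := hu
      have hv0 : (0:ℝ) < v := hv
      have h1 : (0:ℝ) < 4 * u ^ 2 := by positivity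
      have h2 : 4 * u ^ 2 < 4 * v ^ 2 := by nlinarith
      exact div_lt_div_of_pos_left (pow_pos hl 2) h1 h2
    exact hanti.injOn
  -- image
  have himg : f '' (Set.Ioi (0:ℝ)) = Set.Ioi (0:ℝ) := by
    ext t
    constructor
    · rintro ⟨u, hu, rfl⟩
      have hu0 : (0:ℝ) < u := hu
      exact Set.mem_Ioi.mpr (div_pos (pow_pos hl 2) (by nlinarith))
    · intro ht
      have ht0 : (0:ℝ) < t := ht
      have hst : (0:ℝ) < Real.sqrt t := Real.sqrt_pos.mpr ht0
      refine ⟨l / (2 * Real.sqrt t), Set.mem_Ioi.mpr (div_pos hl (by nlinarith)), ?_⟩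
      have hsq : Real.sqrt t ^ 2 = t := Real.sq_sqrt ht0.le
      simp only [hf]
      rw [div_pow]
      field_simp
      nlinarith [hsq]
  -- the transformed integrand
  have hcomp : ∀ u ∈ Set.Ioi (0:ℝ),
      |(-(l ^ 2 / (2 * u ^ 3)))| • g (f u)
        = 2 / (Real.sqrt π * l) * Real.exp (-(u ^ 2 + c ^ 2 / u ^ 2)) := by
    intro u hu
    have hu0 : (0:ℝ) < u := hu
    have habs : |(-(l ^ 2 / (2 * u ^ 3)))| = l ^ 2 / (2 * u ^ 3) := by
      rw [abs_neg, abs_of_pos (by positivity)]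
    have hA : (0:ℝ) < Real.sqrt π * l / u := by positivity
    have hbase : 4 * π * f u = (Real.sqrt π * l / u) ^ 2 := by
      have h2 : Real.sqrt π ^ 2 = π := Real.sq_sqrt pi_pos.le
      simp only [hf]
      rw [div_pow, mul_pow, h2]
      field_simp
    have hrpow : (4 * π * f u) ^ (-(1:ℝ) / 2) = u / (Real.sqrt π * l) := by
      rw [hbase, rpow_neg_half_sq hA]
      field_simp
    have harg1 : f u * z ^ 2 = c ^ 2 / u ^ 2 := by
      simp only [hf, hc]; field_simp; ring
    have harg2 : l ^ 2 / (4 * f u) = u ^ 2 := by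
      simp only [hf]; field_simp
    have hfinv : (f u)⁻¹ = 4 * u ^ 2 / l ^ 2 := by
      simp only [hf]; field_simp
    rw [habs, smul_eq_mul, hg]
    simp only
    rw [hrpow, harg1, harg2, hfinv]
    rw [show Real.exp (-(c ^ 2 / u ^ 2)) * (u / (Real.sqrt π * l) * Real.exp (-u ^ 2))
        = u / (Real.sqrt π * l) * (Real.exp (-(c ^ 2 / u ^ 2)) * Real.exp (-u ^ 2)) by ring,
      ← Real.exp_add]
    rw [show -(c ^ 2 / u ^ 2) + -u ^ 2 = -(u ^ 2 + c ^ 2 / u ^ 2) by ring]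
    field_simp
    ring
  have hint : IntegrableOn g (Set.Ioi (0:ℝ)) := by
    rw [← himg]
    rw [integrableOn_image_iff_integrableOn_abs_deriv_smul measurableSet_Ioi hd hinj g]
    apply IntegrableOn.congr_fun _ (fun u hu => (hcomp u hu).symm) measurableSet_Ioi
    exact (integrableOn_glasser c).const_mul _
  refine ⟨hint, ?_⟩
  have h := integral_image_eq_integral_abs_deriv_smul measurableSet_Ioi hd hinj g
  rw [himg] at h
  rw [h, setIntegral_congr_fun measurableSet_Ioi hcomp, integral_const_mul, glasser c hcpos]
  rw [show -(2 * c) = -(z * l) by rw [hc]; ring]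
  field_simp

open scoped ENNReal NNReal

lemma integrable_tsum' {ι : Type*} [Countable ι] {μ : Measure ℝ} {f : ι → ℝ → ℂ}
    (hf : ∀ i, Integrable (f i) μ)
    (h : ∑' i, ∫⁻ a, ‖f i a‖₊ ∂μ ≠ ⊤) :
    Integrable (fun a => ∑' i, f i a) μ := by
  have hmeas : ∀ i, AEMeasurable (fun a => (‖f i a‖₊ : ℝ≥0∞)) μ := fun i => (hf i).1.aemeasurable.nnnorm.coe_nnreal_ennreal
  have hlt : ∫⁻ a, ∑' i, (‖f i a‖₊ : ℝ≥0∞) ∂μ < ⊤ := by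
    rw [lintegral_tsum hmeas]; exact h.lt_top
  have hae : ∀ᵐ a ∂μ, Summable fun i => ‖f i a‖₊ := by
    filter_upwards [ae_lt_top' (AEMeasurable.ennreal_tsum hmeas) hlt.ne] with a ha
    exact ENNReal.tsum_coe_ne_top_iff_summable.mp ha.ne
  constructor
  · apply aestronglyMeasurable_of_tendsto_ae (atTop : Filter (Finset ι))
      (f := fun s a => ∑ i ∈ s, f i a)
    · exact fun s => s.aestronglyMeasurable_fun_sum fun i _ => (hf i).1
    · filter_upwards [hae] with a ha
      exact (Summable.of_nnnorm ha).hasSum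
  · refine lt_of_le_of_lt (lintegral_mono_ae ?_) hlt
    filter_upwards [hae] with a ha
    calc (‖∑' i, f i a‖₊ : ℝ≥0∞)
        ≤ ((∑' i, ‖f i a‖₊ : ℝ≥0) : ℝ≥0∞) := ENNReal.coe_le_coe.mpr (nnnorm_tsum_le ha)
      _ = ∑' i, (‖f i a‖₊ : ℝ≥0∞) := ENNReal.coe_tsum ha

end LaplaceAux

open LaplaceAux

/-- Lemma 3.1 (analytic content): term-by-term Laplace transform of the hyperbolic term.
Given countably many closed geodesics with lengths `l i > 0` and coefficients `a i`,
and `z > 0`, if `i ↦ |a i|·e^{−(z+1)·l i}/l i` is summable, then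
`∫₀^∞ e^{−t z²} (∑_i a i·(4πt)^{−1/2}·e^{−l i²/(4t) − l i}) t⁻¹ dt` converges absolutely
and equals `∑_i (a i / l i)·e^{−(z+1)·l i}`. -/
theorem laplace_transform_hyperbolic_term {ι : Type*} [Countable ι]
    (l : ι → ℝ) (hl : ∀ i, 0 < l i) (a : ι → ℂ) (z : ℝ) (hz : 0 < z)
    (hsum : Summable fun i => ‖a i‖ * Real.exp (-((z + 1) * l i)) / l i) :
    IntegrableOn
      (fun t : ℝ => (Real.exp (-(t * z ^ 2)) : ℂ)
        * (∑' i, a i * (((4 * π * t) ^ (-(1 : ℝ) / 2)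
            * Real.exp (-((l i) ^ 2 / (4 * t)) - l i) : ℝ) : ℂ))
        * (t : ℂ)⁻¹) (Set.Ioi 0) ∧
    ∫ t in Set.Ioi (0 : ℝ),
        (Real.exp (-(t * z ^ 2)) : ℂ)
          * (∑' i, a i * (((4 * π * t) ^ (-(1 : ℝ) / 2)
              * Real.exp (-((l i) ^ 2 / (4 * t)) - l i) : ℝ) : ℂ))
          * (t : ℂ)⁻¹
      = ∑' i, (a i / (l i : ℂ)) * ((Real.exp (-((z + 1) * l i)) : ℝ) : ℂ) := by
  have hsingle := fun i => LaplaceAux.single (l i) z (hl i) hz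
  set g : ι → ℝ → ℝ := fun i t => Real.exp (-(t * z ^ 2))
      * ((4 * π * t) ^ (-(1:ℝ) / 2) * Real.exp (-(l i ^ 2 / (4 * t)))) * t⁻¹ with hgdef
  set G : ι → ℝ → ℂ := fun i t => (a i * ((Real.exp (-(l i)) : ℝ) : ℂ)) * ((g i t : ℝ) : ℂ)
    with hGdef
  have hgint : ∀ i, IntegrableOn (g i) (Set.Ioi 0) := fun i => (hsingle i).1
  have hgval : ∀ i, ∫ t in Set.Ioi (0:ℝ), g i t = Real.exp (-(z * l i)) / l i :=
    fun i => (hsingle i).2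
  have hGint : ∀ i, Integrable (G i) (volume.restrict (Set.Ioi 0)) := fun i =>
    ((hgint i).ofReal (𝕜 := ℂ)).const_mul _
  -- the i-th term of the statement equals G i t
  have hterm : ∀ (i : ι) (t : ℝ),
      (Real.exp (-(t * z ^ 2)) : ℂ) * (a i * (((4 * π * t) ^ (-(1 : ℝ) / 2)
          * Real.exp (-((l i) ^ 2 / (4 * t)) - l i) : ℝ) : ℂ)) * (t : ℂ)⁻¹ = G i t := by
    intro i t
    have he : Real.exp (-(l i ^ 2 / (4 * t)) - l i)
        = Real.exp (-(l i ^ 2 / (4 * t))) * Real.exp (-(l i)) := by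
      rw [← Real.exp_add]; ring_nf
    simp only [hGdef, hgdef, he]
    push_cast
    ring
  -- the full integrand equals the tsum of G
  have hfun : (fun t : ℝ => (Real.exp (-(t * z ^ 2)) : ℂ)
        * (∑' i, a i * (((4 * π * t) ^ (-(1 : ℝ) / 2)
            * Real.exp (-((l i) ^ 2 / (4 * t)) - l i) : ℝ) : ℂ))
        * (t : ℂ)⁻¹) = fun t => ∑' i, G i t := by
    funext t
    rw [← tsum_mul_left, ← tsum_mul_right]
    exact tsum_congr fun i => hterm i t
  -- norms of G i
  have hnormint : ∀ i, ∫ t in Set.Ioi (0:ℝ), ‖G i t‖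
      = ‖a i‖ * Real.exp (-((z + 1) * l i)) / l i := by
    intro i
    have hgn : ∀ t ∈ Set.Ioi (0:ℝ), ‖G i t‖ = ‖a i‖ * Real.exp (-(l i)) * g i t := by
      intro t ht
      have ht0 : (0:ℝ) < t := ht
      have hg0 : 0 ≤ g i t := by
        simp only [hgdef]
        have h1 : (0:ℝ) ≤ (4 * π * t) ^ (-(1:ℝ) / 2) :=
          Real.rpow_nonneg (by positivity) _
        have h2 : (0:ℝ) ≤ t⁻¹ := by positivity
        positivity
      simp only [hGdef]
      rw [norm_mul, norm_mul, Complex.norm_real, Complex.norm_real,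
        Real.norm_of_nonneg (Real.exp_nonneg _), Real.norm_of_nonneg hg0]
    rw [setIntegral_congr_fun measurableSet_Ioi hgn, integral_const_mul, hgval i,
      show Real.exp (-((z + 1) * l i)) = Real.exp (-(l i)) * Real.exp (-(z * l i)) from by
        rw [← Real.exp_add]; ring_nf]
    ring
  -- the lintegral bound
  have hlint : ∑' i, ∫⁻ t, ‖G i t‖₊ ∂(volume.restrict (Set.Ioi 0)) ≠ ⊤ := by
    have h1 : ∀ i, ∫⁻ t, ‖G i t‖₊ ∂(volume.restrict (Set.Ioi 0))
        = ENNReal.ofReal (‖a i‖ * Real.exp (-((z + 1) * l i)) / l i) := by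
      intro i
      simp only [← enorm_eq_nnnorm]
      rw [← ofReal_integral_norm_eq_lintegral_enorm (hGint i), hnormint i]
    simp only [h1]
    rw [← ENNReal.ofReal_tsum_of_nonneg (fun i => div_nonneg (mul_nonneg (norm_nonneg _) (Real.exp_nonneg _)) (hl i).le) hsum]
    exact ENNReal.ofReal_ne_top
  have hmeasG : ∀ i, AEStronglyMeasurable (G i) (volume.restrict (Set.Ioi 0)) :=
    fun i => (hGint i).1
  constructor
  · rw [hfun]
    exact integrable_tsum' hGint hlint
  · rw [hfun, MeasureTheory.integral_tsum hmeasG hlint]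
    refine tsum_congr fun i => ?_
    have : ∫ t in Set.Ioi (0:ℝ), G i t
        = (a i * ((Real.exp (-(l i)) : ℝ) : ℂ)) * ((Real.exp (-(z * l i)) / l i : ℝ) : ℂ) := by
      simp only [hGdef]
      rw [MeasureTheory.integral_const_mul]
      congr 1
      have h := _root_.integral_ofReal (𝕜 := ℂ) (f := g i) (μ := volume.restrict (Set.Ioi 0))
      simp only [RCLike.ofReal_alg, Complex.real_smul, Complex.ofReal_one, mul_one] at h
      rw [← hgval i]
      exact_mod_cast h
    rw [this]
    have hexp : Real.exp (-((z + 1) * l i)) = Real.exp (-(l i)) * Real.exp (-(z * l i)) := by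
      rw [← Real.exp_add]; ring_nf
    rw [hexp]
    have hli : ((l i : ℝ) : ℂ) ≠ 0 := Complex.ofReal_ne_zero.mpr (hl i).ne'
    push_cast
    field_simp
end

section
/- Let A > 0, α > 0 and C ≥ 0 be real numbers, and let h : ℝ → ℂ be measurable on (0, A] with ‖h(t)‖ ≤ C·e^{−α/t} for all t ∈ (0, A]. Then the function s ↦ ∫₀^A t^{s−1} h(t) dt (with t^{s−1} = exp((s−1)·log t) for t > 0) is well defined and entire, i.e., complex-differentiable at every s ∈ ℂ. -/
open MeasureTheory Real

lemma rpow_mul_exp_bound (A α : ℝ) (hA : 0 < A) (hα : 0 < α) (σ : ℝ) :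
    ∃ M : ℝ, 0 ≤ M ∧ ∀ t ∈ Set.Ioc (0:ℝ) A, t ^ σ * Real.exp (-α / t) ≤ M := by
  set n := ⌈-σ⌉₊ with hn
  have hσn : 0 ≤ σ + n := by
    have := Nat.le_ceil (-σ); rw [← hn] at this; linarith
  refine ⟨(n.factorial : ℝ) / α ^ n * A ^ (σ + n), by positivity, ?_⟩
  rintro t ⟨ht0, htA⟩
  have hαt : (0:ℝ) ≤ α / t := le_of_lt (div_pos hα ht0)
  have hexp : Real.exp (-α / t) ≤ (n.factorial : ℝ) / α ^ n * t ^ (n:ℕ) := by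
    have h1 : (α / t) ^ n / n.factorial ≤ Real.exp (α / t) :=
      Real.pow_div_factorial_le_exp (x := α / t) hαt n
    have h2 : (Real.exp (α / t))⁻¹ ≤ ((α / t) ^ n / n.factorial)⁻¹ := by
      apply inv_anti₀ (by positivity) h1
    rw [neg_div, Real.exp_neg]
    calc (Real.exp (α / t))⁻¹ ≤ ((α / t) ^ n / n.factorial)⁻¹ := h2
      _ = (n.factorial : ℝ) / α ^ n * t ^ (n:ℕ) := by
          rw [div_pow]
          field_simp
  have key : t ^ σ * Real.exp (-α / t) ≤ (n.factorial : ℝ) / α ^ n * t ^ (σ + n) := by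
    have e : t ^ σ * t ^ (n:ℕ) = t ^ (σ + n) := by
      rw [← Real.rpow_natCast t n, ← Real.rpow_add ht0]
    calc t ^ σ * Real.exp (-α / t) ≤ t ^ σ * ((n.factorial : ℝ) / α ^ n * t ^ (n:ℕ)) := by
          apply mul_le_mul_of_nonneg_left hexp (Real.rpow_nonneg ht0.le σ)
      _ = (n.factorial : ℝ) / α ^ n * (t ^ σ * t ^ (n:ℕ)) := by ring
      _ = (n.factorial : ℝ) / α ^ n * t ^ (σ + n) := by rw [e]
  refine key.trans ?_
  gcongr


lemma cpow_contOn (A : ℝ) (s : ℂ) :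
    ContinuousOn (fun t : ℝ => (t : ℂ) ^ (s - 1)) (Set.Ioc 0 A) := by
  intro t ht
  refine (ContinuousAt.cpow (Complex.continuous_ofReal.continuousAt)
    continuousAt_const ?_).continuousWithinAt
  left; simpa using ht.1

lemma norm_cpow_of_pos {t : ℝ} (ht : 0 < t) (w : ℂ) :
    ‖(t : ℂ) ^ w‖ = t ^ w.re := by
  rw [Complex.norm_cpow_eq_rpow_re_of_pos ht]

set_option maxHeartbeats 1600000 in
/-- Small-time part of Lemma 4.1: if `h` is measurable on `(0, A]` and
`‖h(t)‖ ≤ C·e^{−α/t}` there (with `A > 0`, `α > 0`, `C ≥ 0`), then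
`s ↦ ∫₀^A t^{s−1} h(t) dt` is well defined and entire in `s`. -/
theorem truncated_mellin_entire (A α C : ℝ) (hA : 0 < A) (hα : 0 < α) (hC : 0 ≤ C)
    (h : ℝ → ℂ)
    (hmeas : AEStronglyMeasurable h (volume.restrict (Set.Ioc 0 A)))
    (hbound : ∀ t ∈ Set.Ioc (0 : ℝ) A, ‖h t‖ ≤ C * Real.exp (-α / t)) :
    (∀ s : ℂ, IntegrableOn (fun t : ℝ => (t : ℂ) ^ (s - 1) * h t) (Set.Ioc 0 A)) ∧
    (∀ s : ℂ, DifferentiableAt ℂ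
      (fun s : ℂ => ∫ t in Set.Ioc (0 : ℝ) A, (t : ℂ) ^ (s - 1) * h t) s) := by
  have hIoc : MeasurableSet (Set.Ioc (0:ℝ) A) := measurableSet_Ioc
  have hfin : volume (Set.Ioc (0:ℝ) A) < ⊤ := measure_Ioc_lt_top
  -- Part 1: integrability for every s
  have hint : ∀ s : ℂ, IntegrableOn (fun t : ℝ => (t : ℂ) ^ (s - 1) * h t) (Set.Ioc 0 A) := by
    intro s
    obtain ⟨M, hM0, hM⟩ := rpow_mul_exp_bound A α hA hα (s.re - 1)
    have haesm : AEStronglyMeasurable (fun t : ℝ => (t : ℂ) ^ (s - 1) * h t)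
        (volume.restrict (Set.Ioc 0 A)) :=
      ((cpow_contOn A s).aestronglyMeasurable hIoc).mul hmeas
    refine Integrable.mono' (g := fun _ : ℝ => C * M)
      (integrableOn_const hfin.ne) haesm ?_
    filter_upwards [ae_restrict_mem hIoc] with t ht
    have ht0 := ht.1
    calc ‖(t : ℂ) ^ (s - 1) * h t‖ = t ^ (s.re - 1) * ‖h t‖ := by
          rw [norm_mul, norm_cpow_of_pos ht0]
          norm_num
      _ ≤ t ^ (s.re - 1) * (C * Real.exp (-α / t)) := by
          exact mul_le_mul_of_nonneg_left (hbound t ht) (Real.rpow_nonneg ht0.le _)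
      _ = C * (t ^ (s.re - 1) * Real.exp (-α / t)) := by ring
      _ ≤ C * M := mul_le_mul_of_nonneg_left (hM t ht) hC
  refine ⟨hint, fun s => ?_⟩
  -- Part 2: differentiability at s
  set σ := s.re with hσ
  obtain ⟨M1, hM10, hM1⟩ := rpow_mul_exp_bound A α hA hα (σ - 3)
  obtain ⟨M2, hM20, hM2⟩ := rpow_mul_exp_bound A α hA hα (σ - 2)
  obtain ⟨M3, hM30, hM3⟩ := rpow_mul_exp_bound A α hA hα (σ - 1)
  obtain ⟨M4, hM40, hM4⟩ := rpow_mul_exp_bound A α hA hα σ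
  set K : ℝ := C * M1 + C * M3 + C * A * M2 + C * A * M4 with hK
  set F' : ℂ → ℝ → ℂ := fun x t => (t : ℂ) ^ (x - 1) * Complex.log t * h t with hF'
  -- measurability of F' s
  have hF'meas : AEStronglyMeasurable (F' s) (volume.restrict (Set.Ioc 0 A)) := by
    refine AEStronglyMeasurable.mul ?_ hmeas
    refine ContinuousOn.aestronglyMeasurable ?_ hIoc
    refine (cpow_contOn A s).mul ?_
    intro t ht
    refine (Complex.continuous_ofReal.continuousAt.clog ?_).continuousWithinAt
    rw [Complex.mem_slitPlane_iff]
    left; simpa using ht.1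
  -- the key uniform bound on the derivative over the ball of radius 1
  have key_bound : ∀ t ∈ Set.Ioc (0:ℝ) A, ∀ x ∈ Metric.ball s 1, ‖F' x t‖ ≤ K := by
    rintro t ⟨ht0, htA⟩ x hx
    have hre : |x.re - σ| < 1 := by
      calc |x.re - σ| = |(x - s).re| := by simp [hσ, Complex.sub_re]
        _ ≤ ‖x - s‖ := Complex.abs_re_le_norm _
        _ < 1 := by simpa [Complex.dist_eq] using hx
    have hre1 : σ - 2 ≤ x.re - 1 := by have := abs_lt.1 hre; linarith [this.1]
    have hre2 : x.re - 1 ≤ σ := by have := abs_lt.1 hre; linarith [this.2]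
    have hpow : t ^ (x.re - 1) ≤ t ^ (σ - 2) + t ^ σ := by
      rcases le_total t 1 with ht1 | ht1
      · have : t ^ (x.re - 1) ≤ t ^ (σ - 2) :=
          Real.rpow_le_rpow_of_exponent_ge ht0 ht1 hre1
        have h4 : (0:ℝ) ≤ t ^ σ := Real.rpow_nonneg ht0.le _
        linarith
      · have : t ^ (x.re - 1) ≤ t ^ σ :=
          Real.rpow_le_rpow_of_exponent_le ht1 hre2
        have h4 : (0:ℝ) ≤ t ^ (σ - 2) := Real.rpow_nonneg ht0.le _
        linarith
    have hlog : |Real.log t| ≤ t⁻¹ + A := by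
      rcases le_total t 1 with ht1 | ht1
      · have hlt : Real.log t ≤ 0 := Real.log_nonpos ht0.le ht1
        have : Real.log t⁻¹ ≤ t⁻¹ - 1 := Real.log_le_sub_one_of_pos (by positivity)
        rw [Real.log_inv] at this
        rw [abs_of_nonpos hlt]
        linarith
      · have hlt : 0 ≤ Real.log t := Real.log_nonneg ht1
        have : Real.log t ≤ t - 1 := Real.log_le_sub_one_of_pos ht0
        have hti : (0:ℝ) ≤ t⁻¹ := by positivity
        rw [abs_of_nonneg hlt]
        linarith
    have hnorm : ‖F' x t‖ = t ^ (x.re - 1) * |Real.log t| * ‖h t‖ := by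
      rw [hF']
      simp only [norm_mul]
      rw [norm_cpow_of_pos ht0, ← Complex.ofReal_log ht0.le]
      norm_num
    have e1 : t ^ (σ - 2) * t⁻¹ = t ^ (σ - 3) := by
      rw [← Real.rpow_neg_one t, ← Real.rpow_add ht0]; ring_nf
    have e2 : t ^ σ * t⁻¹ = t ^ (σ - 1) := by
      rw [← Real.rpow_neg_one t, ← Real.rpow_add ht0]; ring_nf
    have b1 := hM1 t ⟨ht0, htA⟩
    have b2 := hM2 t ⟨ht0, htA⟩
    have b3 := hM3 t ⟨ht0, htA⟩
    have b4 := hM4 t ⟨ht0, htA⟩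
    have hpe : (0:ℝ) ≤ t ^ (x.re - 1) := Real.rpow_nonneg ht0.le _
    have hle : (0:ℝ) ≤ Real.exp (-α / t) := (Real.exp_pos _).le
    calc ‖F' x t‖ = t ^ (x.re - 1) * |Real.log t| * ‖h t‖ := hnorm
      _ ≤ (t ^ (σ - 2) + t ^ σ) * (t⁻¹ + A) * (C * Real.exp (-α / t)) := by
          apply mul_le_mul
          · exact mul_le_mul hpow hlog (abs_nonneg _) (by positivity)
          · exact hbound t ⟨ht0, htA⟩
          · exact norm_nonneg _
          · positivity
      _ = C * (t ^ (σ - 3) * Real.exp (-α / t)) + C * (t ^ (σ - 1) * Real.exp (-α / t))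
            + (C * A) * (t ^ (σ - 2) * Real.exp (-α / t))
            + (C * A) * (t ^ σ * Real.exp (-α / t)) := by
          rw [← e1, ← e2]; ring
      _ ≤ C * M1 + C * M3 + (C * A) * M2 + (C * A) * M4 := by
          gcongr
      _ = K := by rw [hK]
  -- differentiability of the integrand
  have hdiff : ∀ t ∈ Set.Ioc (0:ℝ) A, ∀ x : ℂ,
      HasDerivAt (fun y : ℂ => (t : ℂ) ^ (y - 1) * h t) (F' x t) x := by
    rintro t ⟨ht0, htA⟩ x
    have htne : (t : ℂ) ≠ 0 := by
      simp only [ne_eq, Complex.ofReal_eq_zero]; exact ne_of_gt ht0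
    have h1 : HasDerivAt (fun y : ℂ => (t : ℂ) ^ (y - 1))
        ((t : ℂ) ^ (x - 1) * Complex.log t * 1) x := by
      exact HasDerivAt.const_cpow ((hasDerivAt_id x).sub_const 1) (Or.inl htne)
    have := h1.mul_const (h t)
    simpa [hF', mul_comm, mul_assoc, mul_left_comm] using this
  -- apply the dominated parametric differentiation lemma
  have main : Integrable (F' s) (volume.restrict (Set.Ioc 0 A)) ∧
      HasDerivAt (fun n : ℂ => ∫ t in Set.Ioc (0:ℝ) A, (t : ℂ) ^ (n - 1) * h t)
        (∫ t in Set.Ioc (0:ℝ) A, F' s t) s := by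
    apply hasDerivAt_integral_of_dominated_loc_of_deriv_le (bound := fun _ : ℝ => K)
      (s := Metric.ball s 1) (Metric.ball_mem_nhds s one_pos)
    · exact Filter.Eventually.of_forall fun x =>
        ((cpow_contOn A x).aestronglyMeasurable hIoc).mul hmeas
    · exact hint s
    · exact hF'meas
    · filter_upwards [ae_restrict_mem hIoc] with t ht x hx
      exact key_bound t ht x hx
    · exact integrableOn_const hfin.ne
    · filter_upwards [ae_restrict_mem hIoc] with t ht x _
      exact hdiff t ht x
  exact main.2.differentiableAt
end
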